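/- arXiv:0801.0649 — 2 statements merged into one kernel-verified Lean document; each statement's English description precedes it below -/
import Mathlib

section
/- The entanglement relation on qubits of a quantum register is transitive: if qubit x is entangled with qubit y, and y is entangled with z, then x is entangled with z. (Here x and y are called separable if there is a bipartition A, B of the qubits with x ∈ A, y ∈ B and states φ_A, φ_B such that the register state factors as φ_A ⊗ φ_B; they are entangled otherwise.) -/
/-- An `n`-qubit register state: amplitudes indexed by computational basis states. -/
abbrev QState (n : ℕ) := (Fin n → Fin 2) → ℂ

/-- `f` depends only on the qubits in `A`. -/
def QDependsOn {n : ℕ} (f : QState n) (A : Set (Fin n)) : Prop :=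
  ∀ x y : Fin n → Fin 2, (∀ k ∈ A, x k = y k) → f x = f y

/-- Qubits `i` and `j` are separable w.r.t. `φ`: there is a bipartition `A`, `Aᶜ`
separating them such that `φ` factors as a tensor product over the bipartition. -/
def SeparablePair {n : ℕ} (φ : QState n) (i j : Fin n) : Prop :=
  ∃ A : Set (Fin n), i ∈ A ∧ j ∉ A ∧
    ∃ f g : QState n, QDependsOn f A ∧ QDependsOn g Aᶜ ∧ ∀ x, φ x = f x * g x

/-- Qubits `i` and `j` are entangled iff they are not separable. -/
def EntangledPair {n : ℕ} (φ : QState n) (i j : Fin n) : Prop := ¬ SeparablePair φ i j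

/-- `φ` is a normalized state vector. -/
def Normalized {n : ℕ} (φ : QState n) : Prop :=
  ∑ x : Fin n → Fin 2, ‖φ x‖ ^ 2 = 1

/-- the entanglement relation is transitive. -/
theorem entangled_trans {n : ℕ} (φ : QState n) (hφ : Normalized φ) (x y z : Fin n)
    (hxy : EntangledPair φ x y) (hyz : EntangledPair φ y z) :
    EntangledPair φ x z := by
  rintro ⟨A, hxA, hzA, f, g, hf, hg, hfg⟩
  by_cases hyA : y ∈ A
  · exact hyz ⟨A, hyA, hzA, f, g, hf, hg, hfg⟩
  · exact hxy ⟨A, hxA, hyA, f, g, hf, hg, hfg⟩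
end

section
/- For the abstract quantum state semantics: if A = (⌣, P) is adequate for |φ⟩ (i.e., pairs not related by ⌣ are separable in |φ⟩ and qubits in P are in base states), then the abstract state A' = (⌣', P \ {i}) obtained by the abstract Hadamard rule is adequate for H_i|φ⟩, where ⌣' = ⌣, using that Hadamard acting on qubit i does not affect separability of pairs of qubits and does not create base states elsewhere. -/
/-- Qubit `i` of `φ` is in a computational base state: `φ` factors as
`(indicator of qubit i being |b⟩) · g` with `g` not depending on qubit `i`. -/
def BaseAt {n : ℕ} (φ : QState n) (i : Fin n) : Prop :=
  ∃ (b : Fin 2) (g : QState n), QDependsOn g ({i}ᶜ) ∧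
    ∀ x, φ x = (if x i = b then 1 else 0) * g x

/-- An abstract quantum state `(ent, P)` is adequate for `φ`: every pair of distinct
qubits not related by `ent` is separable, and every qubit in `P` is in a base state
(its measurement is deterministic). -/
def Adequate {n : ℕ} (ent : Fin n → Fin n → Prop) (P : Set (Fin n)) (φ : QState n) : Prop :=
  (∀ x y : Fin n, x ≠ y → ¬ ent x y → SeparablePair φ x y) ∧
  (∀ x ∈ P, BaseAt φ x)

/-- Apply a single-qubit gate `U` to qubit `i` of an `n`-qubit state (i.e. `U_i ⊗ I`). -/
noncomputable def applyAt {n : ℕ} (U : Matrix (Fin 2) (Fin 2) ℂ) (i : Fin n)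
    (φ : QState n) : QState n :=
  fun x => ∑ b : Fin 2, U (x i) b * φ (Function.update x i b)

/-- The Hadamard matrix `H = (1/√2)·[[1,1],[1,−1]]`. -/
noncomputable def Hmat : Matrix (Fin 2) (Fin 2) ℂ :=
  ((Real.sqrt 2 : ℂ))⁻¹ • !![1, 1; 1, -1]

/-- Applying a gate at `i ∈ A` preserves dependence on `A`. -/
lemma dependsOn_applyAt {n : ℕ} (U : Matrix (Fin 2) (Fin 2) ℂ) (i : Fin n)
    (f : QState n) (A : Set (Fin n)) (hi : i ∈ A) (hf : QDependsOn f A) :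
    QDependsOn (applyAt U i f) A := by
  intro x y hxy
  unfold applyAt
  refine Finset.sum_congr rfl fun b _ => ?_
  rw [hxy i hi]
  congr 1
  refine hf _ _ fun k hk => ?_
  by_cases hki : k = i
  · subst hki; simp
  · simp [Function.update_of_ne hki, hxy k hk]

/-- If `φ = f·g` with `g` not depending on `i ∈ A`, then `applyAt U i φ = (applyAt U i f)·g`. -/
lemma applyAt_factor {n : ℕ} (U : Matrix (Fin 2) (Fin 2) ℂ) (i : Fin n)
    (φ f g : QState n) (A : Set (Fin n)) (hi : i ∈ A) (hg : QDependsOn g Aᶜ)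
    (hfg : ∀ x, φ x = f x * g x) :
    ∀ x, applyAt U i φ x = applyAt U i f x * g x := by
  intro x
  unfold applyAt
  rw [Finset.sum_mul]
  refine Finset.sum_congr rfl fun b _ => ?_
  rw [hfg]
  have : g (Function.update x i b) = g x := by
    refine hg _ _ fun k hk => ?_
    have hki : k ≠ i := fun h => hk (h ▸ hi)
    simp [Function.update_of_ne hki]
  rw [this]; ring

/-- the abstract Hadamard rule is sound: if `(ent, P)` is adequate for
`φ`, then `(ent, P \ {i})` is adequate for `H_i|φ⟩`. -/
theorem abstract_hadamard_sound {n : ℕ} (φ : QState n) (ent : Fin n → Fin n → Prop)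
    (P : Set (Fin n)) (i : Fin n) (hφ : Normalized φ) (hA : Adequate ent P φ) :
    Adequate ent (P \ {i}) (applyAt Hmat i φ) := by
  obtain ⟨hsep, hbase⟩ := hA
  constructor
  · intro x y hxy hent
    obtain ⟨A, hxA, hyA, f, g, hf, hg, hfg⟩ := hsep x y hxy hent
    by_cases hiA : i ∈ A
    · exact ⟨A, hxA, hyA, applyAt Hmat i f, g,
        dependsOn_applyAt _ _ _ _ hiA hf, hg,
        applyAt_factor _ _ _ _ _ _ hiA hg hfg⟩
    · refine ⟨A, hxA, hyA, f, applyAt Hmat i g, hf,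
        dependsOn_applyAt _ _ _ _ hiA hg, fun z => ?_⟩
      have := applyAt_factor Hmat i φ g f Aᶜ hiA (by rwa [compl_compl])
        (fun w => by rw [hfg w]; ring) z
      rw [this]; ring
  · intro x hx
    obtain ⟨b, g, hg, heq⟩ := hbase x hx.1
    have hxi : i ≠ x := fun h => hx.2 (h ▸ rfl)
    refine ⟨b, applyAt Hmat i g, dependsOn_applyAt _ _ _ _ hxi hg, fun z => ?_⟩
    have := applyAt_factor Hmat i φ g (fun w => if w x = b then 1 else 0)
      ({x}ᶜ) hxi (by intro u v h; simp [h x (by simp)])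
      (fun w => by rw [heq w]; ring) z
    rw [this]; ring
end
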